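/- If positive reals a₁, …, aₙ span a ℚ-vector space of dimension at most k, then the n-dimensional box with sides a₁, …, aₙ can be dissected into finitely many boxes all of whose side lengths lie in a fixed set {e₁, …, e_k} of k positive reals. -/

import Mathlib

set_option maxHeartbeats 1000000


/-- An axis-parallel box in ℝⁿ with positive side lengths. -/
structure Box (n : ℕ) where
  lower : Fin n → ℝ
  upper : Fin n → ℝ
  lower_lt_upper : ∀ i, lower i < upper i

namespace Box

/-- The closed box as a subset of ℝⁿ. -/
def toSet {n : ℕ} (B : Box n) : Set (Fin n → ℝ) :=
  Set.univ.pi fun i => Set.Icc (B.lower i) (B.upper i)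

/-- The open interior of the box. -/
def interiorSet {n : ℕ} (B : Box n) : Set (Fin n → ℝ) :=
  Set.univ.pi fun i => Set.Ioo (B.lower i) (B.upper i)

/-- The side length of the box in direction `i`. -/
def side {n : ℕ} (B : Box n) (i : Fin n) : ℝ := B.upper i - B.lower i

end Box

/-- The boxes `t` form a finite partition (dissection) of `B`:
pairwise disjoint interiors, and their union covers `B`. -/
def IsDissection {n m : ℕ} (B : Box n) (t : Fin m → Box n) : Prop :=
  (∀ i j, i ≠ j → Disjoint (t i).interiorSet (t j).interiorSet) ∧
  (⋃ i, (t i).toSet) = B.toSet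

/-- `P` is cut by a hyperplane parallel to a pair of its faces into `P₁` and `P₂`. -/
def IsSplit {n : ℕ} (P P₁ P₂ : Box n) : Prop :=
  ∃ (j : Fin n) (c : ℝ), P.lower j < c ∧ c < P.upper j ∧
    P₁.lower = P.lower ∧ P₁.upper = Function.update P.upper j c ∧
    P₂.lower = Function.update P.lower j c ∧ P₂.upper = P.upper



section helpers
open Finset

lemma core_pos_basis (d n : ℕ) (hn : 0 < n) (hd : 0 < d) (b : Fin d → ℝ) (hb : ∀ j, 0 < b j)
    (v : Fin n → Fin d → ℚ) (a : Fin n → ℝ) (ha : ∀ i, 0 < a i)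
    (hav : ∀ i, a i = ∑ j, (v i j : ℝ) * b j) :
    ∃ e : Fin d → ℝ, (∀ j, 0 < e j) ∧
      ∀ i, ∃ q : Fin d → ℚ, (∀ j, 0 ≤ q j) ∧ a i = ∑ j, (q j : ℝ) * e j := by
  classical
  set W : Fin n → ℝ := fun i => ∑ j, |(v i j : ℝ)| * b j with hW_def
  have hWa : ∀ i, a i ≤ W i := by
    intro i
    rw [hav i]
    exact Finset.sum_le_sum fun j _ =>
      mul_le_mul_of_nonneg_right (le_abs_self _) (hb j).le
  have hWpos : ∀ i, 0 < W i := fun i => lt_of_lt_of_le (ha i) (hWa i)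
  set C : ℝ := ∑ i, ∑ j, max (3 * b j * |(v i j : ℝ)| / a i) 0 with hC_def
  have hC0 : 0 ≤ C := Finset.sum_nonneg fun i _ => Finset.sum_nonneg fun j _ => le_max_right _ _
  have hC : ∀ i j, 3 * b j * |(v i j : ℝ)| / a i ≤ C := by
    intro i j
    calc 3 * b j * |(v i j : ℝ)| / a i ≤ max (3 * b j * |(v i j : ℝ)| / a i) 0 := le_max_left _ _
    _ ≤ ∑ j', max (3 * b j' * |(v i j' : ℝ)| / a i) 0 :=
        Finset.single_le_sum (f := fun j' => max (3 * b j' * |(v i j' : ℝ)| / a i) 0)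
          (fun j' _ => le_max_right _ _) (mem_univ j)
    _ ≤ C := Finset.single_le_sum (f := fun i' => ∑ j', max (3 * b j' * |(v i' j' : ℝ)| / a i') 0)
        (fun i' _ => Finset.sum_nonneg fun j' _ => le_max_right _ _) (mem_univ i)
  obtain ⟨R, hR⟩ := exists_rat_gt (1 + d * C)
  have hdR : (0:ℝ) < d := by exact_mod_cast hd
  have hR1 : (1:ℝ) < (R:ℝ) := by nlinarith
  have hRpos : (0:ℝ) < (R:ℝ) := by linarith
  set θ : ℝ := min ((2*(R:ℝ))⁻¹)
    ((univ : Finset (Fin n)).inf' ⟨⟨0,hn⟩, mem_univ _⟩ fun i => a i / (2 * W i)) with hθ_def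
  have hθpos : 0 < θ := by
    apply lt_min
    · positivity
    · refine (Finset.lt_inf'_iff _).2 ?_
      intro i _
      exact div_pos (ha i) (by have := hWpos i; linarith)
  have hθR : θ ≤ (2*(R:ℝ))⁻¹ := min_le_left _ _
  have hθi : ∀ i, θ ≤ a i / (2 * W i) :=
    fun i => le_trans (min_le_right _ _) (Finset.inf'_le _ (mem_univ i))
  have h2Rpos : (0:ℝ) < 2*(R:ℝ) := by linarith
  have hθ2R : θ * (2*(R:ℝ)) ≤ 1 := by
    have h := mul_le_mul_of_nonneg_right hθR (le_of_lt h2Rpos)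
    rwa [inv_mul_cancel₀ h2Rpos.ne'] at h
  have hθhalf : θ ≤ 1/2 := by nlinarith
  choose c hc1 hc2 using fun j => exists_rat_btwn (show b j < b j * (1+θ) by nlinarith [hb j])
  have hcpos : ∀ j, (0:ℝ) < (c j : ℝ) := fun j => (hb j).trans (hc1 j)
  have hcq : ∀ j, (0:ℚ) < c j := fun j => by exact_mod_cast hcpos j
  set S : Fin n → ℚ := fun i => ∑ j, v i j * c j with hS_def
  have hScast : ∀ i, (S i : ℝ) = ∑ j, (v i j : ℝ) * (c j : ℝ) := by
    intro i; push_cast [hS_def]; try ring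
  have hS2 : ∀ i, a i / 2 ≤ (S i : ℝ) := by
    intro i
    have h1 : ∀ j, (v i j : ℝ) * (b j - (c j : ℝ)) ≤ |(v i j : ℝ)| * (θ * b j) := by
      intro j
      have h2 : (c j : ℝ) - b j ≤ θ * b j := by nlinarith [hc2 j]
      have h3 : (v i j : ℝ) * (b j - (c j : ℝ)) ≤ |(v i j : ℝ)| * ((c j : ℝ) - b j) := by
        have hs : (0:ℝ) ≤ |(v i j : ℝ)| + (v i j : ℝ) := by nlinarith [neg_abs_le ((v i j : ℝ))]
        have hcb : (0:ℝ) ≤ (c j : ℝ) - b j := by nlinarith [hc1 j]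
        nlinarith [mul_nonneg hs hcb]
      nlinarith [abs_nonneg ((v i j : ℝ))]
    have h4 : a i - (S i : ℝ) ≤ θ * W i := by
      rw [hav i, hScast i, ← Finset.sum_sub_distrib]
      calc ∑ j, ((v i j : ℝ) * b j - (v i j : ℝ) * (c j : ℝ))
          = ∑ j, (v i j : ℝ) * (b j - (c j : ℝ)) := by apply Finset.sum_congr rfl; intros; ring
        _ ≤ ∑ j, |(v i j : ℝ)| * (θ * b j) := Finset.sum_le_sum fun j _ => h1 j
        _ = θ * W i := by rw [hW_def, Finset.mul_sum]; apply Finset.sum_congr rfl; intros; ring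
    have h5 : θ * W i ≤ a i / 2 := by
      have h := hθi i
      have hW := hWpos i
      calc θ * W i ≤ (a i / (2 * W i)) * W i := mul_le_mul_of_nonneg_right h hW.le
        _ = a i / 2 := by field_simp
    linarith
  set T : ℝ := ∑ l, b l / (c l : ℝ) with hT_def
  have hTd : T < d := by
    have : T < ∑ _l : Fin d, (1:ℝ) := by
      apply Finset.sum_lt_sum_of_nonempty ⟨⟨0,hd⟩, mem_univ _⟩
      intro l _
      rw [div_lt_one (hcpos l)]
      exact hc1 l
    simpa using this
  have hTpos : 0 < T := Finset.sum_pos (fun l _ => div_pos (hb l) (hcpos l)) ⟨⟨0,hd⟩, mem_univ _⟩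
  set e : Fin d → ℝ := fun j => (R:ℝ) * b j / (c j : ℝ) - ((R:ℝ)-1)/d * T with he_def
  have he : ∀ j, 0 < e j := by
    intro j
    have h1 : 1/(1+θ) < b j / (c j : ℝ) := by
      rw [div_lt_div_iff₀ (by linarith) (hcpos j)]
      nlinarith [hc2 j]
    have h2 : ((R:ℝ)-1)/d * T < (R:ℝ)-1 := by
      rw [div_mul_eq_mul_div, div_lt_iff₀ hdR]
      nlinarith
    have h3 : ((R:ℝ)-1) * θ < 1 := by nlinarith
    have h4 : (R:ℝ) - 1 < (R:ℝ) / (1+θ) := by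
      rw [lt_div_iff₀ (by linarith)]
      nlinarith
    have h5 : (R:ℝ)/(1+θ) < (R:ℝ) * b j / (c j : ℝ) := by
      rw [mul_div_assoc]
      calc (R:ℝ)/(1+θ) = (R:ℝ) * (1/(1+θ)) := by ring
        _ < (R:ℝ) * (b j / (c j:ℝ)) := by nlinarith
    show 0 < (R:ℝ) * b j / (c j : ℝ) - ((R:ℝ)-1)/d * T
    linarith
  refine ⟨e, he, fun i => ?_⟩
  set q : Fin d → ℚ := fun j => c j * v i j / R + S i * (R-1) / (d*R) with hq_def
  have hRq : (1:ℚ) < R := by exact_mod_cast hR1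
  have hq0 : ∀ j, 0 ≤ q j := by
    intro j
    have key : 3 * (d:ℝ) * b j * |(v i j : ℝ)| ≤ a i * ((R:ℝ) - 1) := by
      have h1 := hC i j
      have h2 : 3 * b j * |(v i j : ℝ)| ≤ C * a i := by
        rw [div_le_iff₀ (ha i)] at h1; linarith
      nlinarith [ha i, hC0]
    have hc32 : (c j : ℝ) ≤ 3/2 * b j := by nlinarith [hc2 j, hb j]
    have hq_real : 0 ≤ (c j : ℝ) * (v i j : ℝ) * d + (S i : ℝ) * ((R:ℝ)-1) := by
      have h6 : (S i : ℝ) * ((R:ℝ)-1) ≥ (a i / 2) * ((R:ℝ)-1) := by nlinarith [hS2 i]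
      have h7 : (a i / 2) * ((R:ℝ)-1) ≥ 3/2 * d * b j * |(v i j:ℝ)| := by nlinarith
      have h8 : (c j : ℝ) * (v i j : ℝ) * d ≥ -(3/2 * d * b j * |(v i j:ℝ)|) := by
        have h9 : (c j:ℝ) * |(v i j:ℝ)| ≤ 3/2 * b j * |(v i j:ℝ)| :=
          mul_le_mul_of_nonneg_right hc32 (abs_nonneg _)
        have h10 : -(3/2 * b j * |(v i j:ℝ)|) ≤ (c j:ℝ) * (v i j:ℝ) := by
          have h11 := mul_le_mul_of_nonneg_left (neg_abs_le ((v i j:ℝ))) (hcpos j).le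
          nlinarith
        nlinarith [mul_le_mul_of_nonneg_right h10 hdR.le]
      linarith
    have hnum : (0:ℚ) ≤ c j * v i j * d + S i * (R-1) := by exact_mod_cast hq_real
    have hdq : (0:ℚ) < (d:ℚ) := by exact_mod_cast hd
    have hRq0 : (0:ℚ) < R := by linarith
    have hqj : q j = (c j * v i j * d + S i * (R-1)) / (d*R) := by
      show c j * v i j / R + S i * (R-1) / (d*R) = _
      field_simp
    rw [hqj]
    exact div_nonneg hnum (mul_pos hdq hRq0).le
  refine ⟨q, hq0, ?_⟩
  have hcne : ∀ j, ((c j : ℝ)) ≠ 0 := fun j => (hcpos j).ne'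
  have hRne : ((R:ℝ)) ≠ 0 := hRpos.ne'
  have hdne : ((d:ℝ)) ≠ 0 := hdR.ne'
  set A : ℝ := -(((R:ℝ)-1) * T / (d*(R:ℝ))) with hA_def
  set Bc : ℝ := (S i : ℝ) * ((R:ℝ)-1) / d with hB_def
  set G : ℝ := -((S i : ℝ) * ((R:ℝ)-1)^2 * T / ((d:ℝ)^2*(R:ℝ))) with hG_def
  have hterm : ∀ j, (q j : ℝ) * e j
      = (v i j : ℝ) * b j + A * ((c j:ℝ) * (v i j:ℝ)) + Bc * (b j / (c j:ℝ)) + G := by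
    intro j
    have hqcast : (q j : ℝ) = (c j:ℝ) * (v i j:ℝ) / (R:ℝ) + (S i:ℝ) * ((R:ℝ)-1) / (d*(R:ℝ)) := by
      show ((c j * v i j / R + S i * (R-1) / (d*R) : ℚ) : ℝ) = _
      push_cast
      ring
    have hE : e j = (R:ℝ) * b j / (c j : ℝ) - ((R:ℝ)-1)/d * T := rfl
    rw [hqcast, hE, hA_def, hB_def, hG_def]
    field_simp [hcne j]
    ring
  calc a i = ∑ j, (v i j : ℝ) * b j := hav i
    _ = ∑ j, ((q j : ℝ) * e j) := by
        rw [Finset.sum_congr rfl fun j _ => hterm j]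
        rw [Finset.sum_add_distrib, Finset.sum_add_distrib, Finset.sum_add_distrib,
          ← Finset.mul_sum, ← Finset.mul_sum, Finset.sum_const]
        have h1 : ∑ j, (c j:ℝ) * (v i j:ℝ) = (S i : ℝ) := by
          rw [hScast i]; apply Finset.sum_congr rfl; intros; ring
        rw [h1, ← hT_def]
        simp only [card_univ, Fintype.card_fin, nsmul_eq_mul]
        have : A * (S i:ℝ) + Bc * T + (d:ℝ) * G = 0 := by
          rw [hA_def, hB_def, hG_def]
          field_simp
          ring
        linarith


lemma pos_rat_comb (n k : ℕ) (a : Fin n → ℝ) (ha : ∀ i, 0 < a i)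
    (hrank : Module.rank ℚ (Submodule.span ℚ (Set.range a)) ≤ k) :
    ∃ e : Fin k → ℝ, (∀ j, 0 < e j) ∧
      ∀ i, ∃ q : Fin k → ℚ, (∀ j, 0 ≤ q j) ∧ a i = ∑ j, (q j : ℝ) * e j := by
  classical
  rcases Nat.eq_zero_or_pos n with hn | hn
  · subst hn
    exact ⟨fun _ => 1, fun _ => one_pos, fun i => i.elim0⟩
  obtain ⟨bs, hbs_sub, hspan, hindep⟩ := exists_linearIndependent ℚ (Set.range a)
  have hfin : bs.Finite := (Set.finite_range a).subset hbs_sub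
  obtain ⟨d, f, hf⟩ := hfin.fin_embedding
  set b : Fin d → ℝ := ⇑f with hb_def
  have hbmem : ∀ j, b j ∈ bs := fun j => hf ▸ Set.mem_range_self j
  have hb : ∀ j, 0 < b j := fun j => by
    obtain ⟨i, hi⟩ := hbs_sub (hbmem j)
    exact hi ▸ ha i
  have hd : 0 < d := by
    rcases Nat.eq_zero_or_pos d with h0 | h0
    · exfalso
      subst h0
      have hbs : bs = ∅ := by
        rw [← hf, Set.range_eq_empty]
      have hmem : a ⟨0, hn⟩ ∈ Submodule.span ℚ (Set.range a) :=
        Submodule.subset_span (Set.mem_range_self _)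
      rw [← hspan, hbs, Submodule.span_empty, Submodule.mem_bot] at hmem
      exact (ha ⟨0, hn⟩).ne' hmem
    · exact h0
  -- d ≤ k
  have hrange : Set.range b = bs := hf
  have hb_ind : LinearIndependent ℚ b := by
    have h := hindep.comp (fun j : Fin d => (⟨b j, hbmem j⟩ : bs))
      (fun x y hxy => f.injective (congrArg Subtype.val hxy))
    exact h
  have hdk : d ≤ k := by
    set V := Submodule.span ℚ (Set.range a)
    have hbV : ∀ j, b j ∈ V := fun j => Submodule.subset_span (hbs_sub (hbmem j))
    set b' : Fin d → V := fun j => ⟨b j, hbV j⟩ with hb'_def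
    have hb'_ind : LinearIndependent ℚ b' := by
      apply LinearIndependent.of_comp V.subtype
      exact hb_ind
    have hcard := hb'_ind.cardinal_le_rank
    rw [Cardinal.mk_fin] at hcard
    exact_mod_cast hcard.trans hrank
  -- coordinates
  have hcoord : ∀ i, ∃ c : Fin d → ℚ, ∑ j, c j • b j = a i := by
    intro i
    rw [← Submodule.mem_span_range_iff_exists_fun ℚ, hrange, hspan]
    exact Submodule.subset_span (Set.mem_range_self i)
  choose v hv using hcoord
  have hav : ∀ i, a i = ∑ j, (v i j : ℝ) * b j := by
    intro i
    rw [← hv i]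
    exact Finset.sum_congr rfl fun j _ => (Rat.smul_def _ _)
  obtain ⟨e, he, hq⟩ := core_pos_basis d n hn hd b hb v a ha hav
  set e' : Fin k → ℝ := fun j => if h : (j:ℕ) < d then e ⟨j, h⟩ else 1 with he'_def
  have he' : ∀ j, 0 < e' j := fun j => by
    rw [he'_def]
    dsimp only
    split
    · exact he _
    · exact one_pos
  refine ⟨e', he', fun i => ?_⟩
  obtain ⟨q, hq0, hqe⟩ := hq i
  set q' : Fin k → ℚ := fun j => if h : (j:ℕ) < d then q ⟨j, h⟩ else 0 with hq'_def
  have hq'0 : ∀ j, 0 ≤ q' j := fun j => by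
    rw [hq'_def]; dsimp only; split
    · exact hq0 _
    · exact le_refl 0
  refine ⟨q', hq'0, ?_⟩
  have himg : ∀ x : Fin k, x ∈ (univ : Finset (Fin d)).image (Fin.castLE hdk) ↔ (x:ℕ) < d := by
    intro x
    simp only [mem_image, mem_univ, true_and]
    constructor
    · rintro ⟨j, rfl⟩; exact j.isLt
    · intro h; exact ⟨⟨x, h⟩, rfl⟩
  have hsum : ∑ j : Fin k, (q' j : ℝ) * e' j
      = ∑ j ∈ (univ : Finset (Fin d)).image (Fin.castLE hdk), (q' j : ℝ) * e' j := by
    symm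
    apply Finset.sum_subset (subset_univ _)
    intro x _ hx
    rw [himg x] at hx
    have : q' x = 0 := by rw [hq'_def]; exact dif_neg hx
    rw [this]
    simp
  rw [hqe, hsum, Finset.sum_image (by intro x _ y _ h; exact Fin.castLE_injective hdk h)]
  apply Finset.sum_congr rfl
  intro j _
  have h1 : q' (Fin.castLE hdk j) = q j := by
    rw [hq'_def]
    dsimp only
    simp only [Fin.coe_castLE]
    rw [dif_pos j.isLt]
  have h2 : e' (Fin.castLE hdk j) = e j := by
    rw [he'_def]
    dsimp only
    simp only [Fin.coe_castLE]
    rw [dif_pos j.isLt]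
  rw [h1, h2]


lemma pos_nat_comb (n k : ℕ) (a : Fin n → ℝ) (ha : ∀ i, 0 < a i)
    (hrank : Module.rank ℚ (Submodule.span ℚ (Set.range a)) ≤ k) :
    ∃ e : Fin k → ℝ, (∀ j, 0 < e j) ∧
      ∀ i, ∃ N : Fin k → ℕ, a i = ∑ j, (N j : ℝ) * e j := by
  classical
  obtain ⟨e, he, h⟩ := pos_rat_comb n k a ha hrank
  choose q hq0 hqe using h
  set D : ℕ := ∏ i, ∏ j, (q i j).den with hD_def
  have hD0 : 0 < D := Finset.prod_pos fun i _ => Finset.prod_pos fun j _ => (q i j).pos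
  have hDR : (0:ℝ) < D := by exact_mod_cast hD0
  have hdvd : ∀ i j, (q i j).den ∣ D := fun i j =>
    dvd_trans (Finset.dvd_prod_of_mem (fun j' => (q i j').den) (mem_univ j))
      (Finset.dvd_prod_of_mem (fun i' => ∏ j', (q i' j').den) (mem_univ i))
  refine ⟨fun j => e j / D, fun j => div_pos (he j) hDR, fun i => ?_⟩
  refine ⟨fun j => (q i j * D).num.toNat, ?_⟩
  rw [hqe i]
  apply Finset.sum_congr rfl
  intro j _
  obtain ⟨m, hm⟩ := hdvd i j
  have hdenne : ((q i j).den : ℚ) ≠ 0 := by exact_mod_cast (q i j).den_nz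
  have hval : q i j * (D:ℚ) = (((q i j).num * m : ℤ) : ℚ) := by
    rw [hm]
    push_cast
    rw [← mul_assoc, Rat.mul_den_eq_num]
  have hden1 : (q i j * (D:ℚ)).den = 1 := by rw [hval]; exact Rat.den_intCast _
  have hqq : (((q i j * (D:ℚ)).num : ℤ) : ℚ) = q i j * (D:ℚ) := by
    conv_rhs => rw [← Rat.num_div_den (q i j * (D:ℚ))]
    rw [hden1]
    simp
  have hnn : 0 ≤ (q i j * (D:ℚ)).num := Rat.num_nonneg.mpr (mul_nonneg (hq0 i j) (by positivity))
  have hNq : (((q i j * (D:ℚ)).num.toNat : ℤ) : ℚ) = q i j * (D:ℚ) := by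
    rw [Int.toNat_of_nonneg hnn, hqq]
  have hNR : (((q i j * (D:ℚ)).num.toNat : ℕ) : ℝ) = (q i j : ℝ) * (D:ℝ) := by
    exact_mod_cast congrArg (fun x : ℚ => (x : ℝ)) hNq
  rw [hNR]
  field_simp

lemma exists_interval (c : ℕ → ℝ) (y : ℝ) : ∀ m : ℕ, 0 < m → c 0 ≤ y → y ≤ c m →
    ∃ t, t < m ∧ c t ≤ y ∧ y ≤ c (t+1) := by
  intro m
  induction m with
  | zero => intro h; exact absurd h (lt_irrefl 0)
  | succ m ih =>
    intro _ h0 hm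
    rcases Nat.eq_zero_or_pos m with rfl | hm0
    · exact ⟨0, Nat.zero_lt_one, h0, hm⟩
    · by_cases hy : y ≤ c m
      · obtain ⟨t, ht, h1, h2⟩ := ih hm0 h0 hy
        exact ⟨t, Nat.lt_succ_of_lt ht, h1, h2⟩
      · exact ⟨m, Nat.lt_succ_self m, le_of_not_ge hy, hm⟩

end helpers

/-- If the sides span a `ℚ`-vector space of dimension at most `k`, the box can be
dissected into boxes all of whose side lengths lie in a fixed set `{e₁, …, e_k}`
of `k` positive reals. -/
theorem dissection_with_sides_from_positive_basis (n k : ℕ) (a : Fin n → ℝ)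
    (ha : ∀ i, 0 < a i)
    (hrank : Module.rank ℚ (Submodule.span ℚ (Set.range a)) ≤ k) :
    ∃ e : Fin k → ℝ, (∀ j, 0 < e j) ∧
      ∀ B : Box n, B.side = a →
        ∃ (m : ℕ) (t : Fin m → Box n), IsDissection B t ∧
          ∀ i, ∀ d : Fin n, ∃ j, (t i).side d = e j := by
  classical
  obtain ⟨e, he, hN⟩ := pos_nat_comb n k a ha hrank
  refine ⟨e, he, fun B hB => ?_⟩
  choose N hNa using hN
  set L : Fin n → List ℝ :=
    fun i => (List.ofFn fun j : Fin k => List.replicate (N i j) (e j)).flatten with hL_def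
  have hLsum : ∀ i, (L i).sum = a i := by
    intro i
    rw [hL_def]
    dsimp only
    rw [List.sum_flatten, List.map_ofFn, List.sum_ofFn]
    rw [hNa i]
    apply Finset.sum_congr rfl
    intro j _
    simp [List.sum_replicate, nsmul_eq_mul, Function.comp]
  have hLmem : ∀ i, ∀ x ∈ L i, ∃ j, x = e j := by
    intro i x hx
    rw [hL_def] at hx
    dsimp only at hx
    rw [List.mem_flatten] at hx
    obtain ⟨l, hl, hxl⟩ := hx
    rw [List.mem_ofFn] at hl
    obtain ⟨j, rfl⟩ := hl
    exact ⟨j, (List.eq_of_mem_replicate hxl)⟩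
  have hLpos : ∀ i, ∀ x ∈ L i, 0 < x := by
    intro i x hx
    obtain ⟨j, rfl⟩ := hLmem i x hx
    exact he j
  set M : Fin n → ℕ := fun i => (L i).length with hM_def
  have hM0 : ∀ i, 0 < M i := by
    intro i
    rw [hM_def]
    dsimp only
    rw [List.length_pos_iff]
    intro hnil
    have := hLsum i
    rw [hnil] at this
    simp at this
    exact (ha i).ne' this.symm
  set cpt : Fin n → ℕ → ℝ := fun i t => B.lower i + ((L i).take t).sum with hcpt_def
  have hstep : ∀ i t (h : t < (L i).length), cpt i (t+1) = cpt i t + (L i)[t] := by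
    intro i t h
    rw [hcpt_def]
    dsimp only
    rw [List.sum_take_succ _ _ h]
    ring
  have hlt : ∀ i t, t < M i → cpt i t < cpt i (t+1) := by
    intro i t h
    rw [hstep i t h]
    have := hLpos i _ (List.getElem_mem h)
    linarith
  have hmono : ∀ i, Monotone (cpt i) := by
    intro i
    apply monotone_nat_of_le_succ
    intro t
    rcases lt_or_ge t (L i).length with h | h
    · rw [hstep i t h]
      have := hLpos i _ (List.getElem_mem h)
      linarith
    · rw [hcpt_def]
      dsimp only
      rw [List.take_of_length_le h, List.take_of_length_le (le_trans h (Nat.le_succ t))]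
  have h0 : ∀ i, cpt i 0 = B.lower i := by
    intro i; rw [hcpt_def]; simp
  have hend : ∀ i, cpt i (M i) = B.upper i := by
    intro i
    rw [hcpt_def]
    dsimp only
    rw [List.take_length, hLsum i]
    have : B.side i = a i := by rw [hB]
    rw [Box.side] at this
    linarith
  have hcard : Fintype.card (∀ i, Fin (M i)) = ∏ i, M i := by simp
  set G : (∀ i, Fin (M i)) ≃ Fin (∏ i, M i) := Fintype.equivFinOfCardEq hcard with hG_def
  set box : (∀ i, Fin (M i)) → Box n := fun σ =>
    ⟨fun i => cpt i (σ i), fun i => cpt i (σ i + 1), fun i => hlt i (σ i) (σ i).isLt⟩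
    with hbox_def
  refine ⟨∏ i, M i, fun x => box (G.symm x), ⟨?_, ?_⟩, ?_⟩
  · -- disjoint interiors
    intro x y hxy
    have hσ : G.symm x ≠ G.symm y := fun h => hxy (by
      have := congrArg G h
      simpa using this)
    rw [Set.disjoint_left]
    intro z hz1 hz2
    have hne : ∃ i, G.symm x i ≠ G.symm y i := by
      by_contra hc
      push_neg at hc
      exact hσ (funext hc)
    obtain ⟨i, hi⟩ := hne
    have hz1i := hz1 i (Set.mem_univ i)
    have hz2i := hz2 i (Set.mem_univ i)
    simp only [hbox_def, Box.interiorSet, Set.mem_Ioo] at hz1i hz2i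
    set s := (G.symm x i : ℕ)
    set t := (G.symm y i : ℕ)
    have hst : s ≠ t := fun h => hi (Fin.ext h)
    rcases lt_or_gt_of_ne hst with h | h
    · have : cpt i (s+1) ≤ cpt i t := hmono i h
      linarith [hz1i.2, hz2i.1]
    · have : cpt i (t+1) ≤ cpt i s := hmono i h
      linarith [hz1i.1, hz2i.2]
  · -- union
    ext z
    simp only [Set.mem_iUnion]
    constructor
    · rintro ⟨x, hx⟩
      intro i _
      have hxi := hx i (Set.mem_univ i)
      simp only [hbox_def, Box.toSet, Set.mem_Icc] at hxi
      constructor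
      · calc B.lower i = cpt i 0 := (h0 i).symm
          _ ≤ cpt i (G.symm x i) := hmono i (Nat.zero_le _)
          _ ≤ z i := hxi.1
      · calc z i ≤ cpt i (G.symm x i + 1) := hxi.2
          _ ≤ cpt i (M i) := hmono i (G.symm x i).isLt
          _ = B.upper i := hend i
    · intro hz
      have hzt : ∀ i, ∃ t, t < M i ∧ cpt i t ≤ z i ∧ z i ≤ cpt i (t+1) := by
        intro i
        have hzi := hz i (Set.mem_univ i)
        rw [Set.mem_Icc] at hzi
        exact exists_interval (cpt i) (z i) (M i) (hM0 i)
          (by rw [h0 i]; exact hzi.1) (by rw [hend i]; exact hzi.2)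
      choose tt htt h1 h2 using hzt
      refine ⟨G (fun i => ⟨tt i, htt i⟩), ?_⟩
      intro i _
      rw [Equiv.symm_apply_apply]
      exact Set.mem_Icc.mpr ⟨h1 i, h2 i⟩
  · -- sides
    intro x d
    have hd := (G.symm x d).isLt
    obtain ⟨j, hj⟩ := hLmem d ((L d)[(G.symm x d : ℕ)]) (List.getElem_mem hd)
    refine ⟨j, ?_⟩
    show cpt d (G.symm x d + 1) - cpt d (G.symm x d) = e j
    rw [hstep d _ hd, ← hj]
    ring
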